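/- Let f₁ : ℝ → ℝ be a C¹ function that is κ-quasar-convex with respect to the point 0 with min_{x∈ℝ} f₁(x) = f₁(0) = 0, and let f₂ be a nonnegative C¹ function defined on the unit sphere S^{p−1} of ℝ^p. Define f : ℝ^p → ℝ by f(x) = f₁(‖x‖) f₂(x/‖x‖) for x ≠ 0 and f(0) = 0. Then f is nonnegative, C¹, and κ-quasar-convex on ℝ^p with respect to x* = 0; moreover for x ≠ 0 its gradient is ∇f(x) = (x/‖x‖) f₁′(‖x‖) f₂(x/‖x‖) + (1/‖x‖)(Id − xxᵀ/‖x‖²) f₁(‖x‖) ∇f₂(x/‖x‖), where ∇f₂ denotes the (Riemannian/tangential) gradient of f₂ on the sphere. -/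

import Mathlib

set_option maxHeartbeats 1000000

open RealInnerProductSpace Topology Filter

section aux

variable {F : Type*} [NormedAddCommGroup F] [InnerProductSpace ℝ F]

lemma aux_hasFDerivAt_norm (x : F) (hx : x ≠ 0) :
    HasFDerivAt (fun y : F => ‖y‖) (‖x‖⁻¹ • innerSL ℝ x) x := by
  have hsq : HasFDerivAt (fun y : F => ‖y‖ ^ 2) (2 • (innerSL ℝ x)) x :=
    (hasStrictFDerivAt_norm_sq x).hasFDerivAt
  have h0 : ‖x‖ ^ 2 ≠ 0 := pow_ne_zero 2 (norm_ne_zero_iff.2 hx)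
  have h2 := hsq.sqrt h0
  have hfun : (fun y : F => Real.sqrt (‖y‖ ^ 2)) = fun y : F => ‖y‖ := by
    funext y; rw [Real.sqrt_sq (norm_nonneg y)]
  rw [hfun] at h2
  convert h2 using 1
  rw [Real.sqrt_sq (norm_nonneg x)]
  ext y
  have hnx : ‖x‖ ≠ 0 := norm_ne_zero_iff.2 hx
  simp only [ContinuousLinearMap.smul_apply, smul_eq_mul, two_smul,
    ContinuousLinearMap.add_apply]
  field_simp
  ring

end aux

theorem quasar_convex_spherical_product
    (p : ℕ) (hp : 1 ≤ p)
    (κ : ℝ) (hκ0 : 0 < κ) (hκ1 : κ ≤ 1)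
    (f₁ : ℝ → ℝ) (hf₁ : ContDiff ℝ 1 f₁)
    (hf₁min : ∀ t : ℝ, f₁ 0 ≤ f₁ t) (hf₁0 : f₁ 0 = 0)
    (hf₁qc : ∀ t : ℝ, f₁ t + (1/κ) * (deriv f₁ t * (0 - t)) ≤ f₁ 0)
    (f₂ : EuclideanSpace ℝ (Fin p) → ℝ) (hf₂ : ContDiff ℝ 1 f₂)
    (hf₂pos : ∀ u : EuclideanSpace ℝ (Fin p), ‖u‖ = 1 → 0 ≤ f₂ u)
    (f : EuclideanSpace ℝ (Fin p) → ℝ)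
    (hf0 : f 0 = 0)
    (hfdef : ∀ x : EuclideanSpace ℝ (Fin p), x ≠ 0 →
      f x = f₁ ‖x‖ * f₂ (‖x‖⁻¹ • x)) :
    (∀ x, 0 ≤ f x) ∧
    ContDiff ℝ 1 f ∧
    (∀ x : EuclideanSpace ℝ (Fin p),
      f x + (1/κ) * ⟪gradient f x, (0 : EuclideanSpace ℝ (Fin p)) - x⟫ ≤ f 0) ∧
    (∀ x : EuclideanSpace ℝ (Fin p), x ≠ 0 →
      gradient f x =
        (deriv f₁ ‖x‖ * f₂ (‖x‖⁻¹ • x)) • (‖x‖⁻¹ • x)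
        + (f₁ ‖x‖ / ‖x‖) •
            (gradient f₂ (‖x‖⁻¹ • x)
              - ⟪‖x‖⁻¹ • x, gradient f₂ (‖x‖⁻¹ • x)⟫ • (‖x‖⁻¹ • x))) := by
  have hfeq : f = fun y => f₁ ‖y‖ * f₂ (‖y‖⁻¹ • y) := by
    funext x
    by_cases hx : x = 0
    · subst hx; simp [hf0, hf₁0]
    · exact hfdef x hx
  subst hfeq
  have hf₁d : Differentiable ℝ f₁ := hf₁.differentiable one_ne_zero
  have hf₂d : Differentiable ℝ f₂ := hf₂.differentiable one_ne_zero
  have hderiv0 : deriv f₁ 0 = 0 := by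
    have hmin : IsLocalMin f₁ 0 := Filter.Eventually.of_forall hf₁min
    exact hmin.deriv_eq_zero
  have hfd₂ : ∀ u v : EuclideanSpace ℝ (Fin p), fderiv ℝ f₂ u v = ⟪gradient f₂ u, v⟫ := by
    intro u v
    rw [gradient, InnerProductSpace.toDual_symm_apply]
  -- the claimed gradient
  set G : EuclideanSpace ℝ (Fin p) → EuclideanSpace ℝ (Fin p) := fun x =>
    (deriv f₁ ‖x‖ * f₂ (‖x‖⁻¹ • x)) • (‖x‖⁻¹ • x)
      + (f₁ ‖x‖ / ‖x‖) • (gradient f₂ (‖x‖⁻¹ • x)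
          - ⟪‖x‖⁻¹ • x, gradient f₂ (‖x‖⁻¹ • x)⟫ • (‖x‖⁻¹ • x)) with hG
  have key : ∀ x : EuclideanSpace ℝ (Fin p), x ≠ 0 →
      HasGradientAt (fun y => f₁ ‖y‖ * f₂ (‖y‖⁻¹ • y)) (G x) x := by
    intro x hx
    have ht : ‖x‖ ≠ 0 := norm_ne_zero_iff.2 hx
    have hN := aux_hasFDerivAt_norm x hx
    have hA : HasFDerivAt (fun y : EuclideanSpace ℝ (Fin p) => f₁ ‖y‖)
        (deriv f₁ ‖x‖ • (‖x‖⁻¹ • innerSL ℝ x)) x :=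
      (hf₁d ‖x‖).hasDerivAt.comp_hasFDerivAt x hN
    have hI : HasFDerivAt (fun y : EuclideanSpace ℝ (Fin p) => ‖y‖⁻¹)
        ((-(‖x‖ ^ 2)⁻¹) • (‖x‖⁻¹ • innerSL ℝ x)) x :=
      (hasDerivAt_inv ht).comp_hasFDerivAt x hN
    have hr : HasFDerivAt (fun y : EuclideanSpace ℝ (Fin p) => ‖y‖⁻¹ • y)
        (‖x‖⁻¹ • ContinuousLinearMap.id ℝ (EuclideanSpace ℝ (Fin p)) +
          ((-(‖x‖ ^ 2)⁻¹) • (‖x‖⁻¹ • innerSL ℝ x)).smulRight x) x :=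
      hI.smul (hasFDerivAt_id x)
    have hB : HasFDerivAt (fun y : EuclideanSpace ℝ (Fin p) => f₂ (‖y‖⁻¹ • y))
        ((fderiv ℝ f₂ (‖x‖⁻¹ • x)).comp
          (‖x‖⁻¹ • ContinuousLinearMap.id ℝ (EuclideanSpace ℝ (Fin p)) +
            ((-(‖x‖ ^ 2)⁻¹) • (‖x‖⁻¹ • innerSL ℝ x)).smulRight x)) x := by
      exact HasFDerivAt.comp (f := fun y : EuclideanSpace ℝ (Fin p) => ‖y‖⁻¹ • y)
        x (hf₂d _).hasFDerivAt hr
    have hfd : HasFDerivAt (fun y : EuclideanSpace ℝ (Fin p) => f₁ ‖y‖ * f₂ (‖y‖⁻¹ • y)) _ x :=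
      hA.mul hB
    rw [hasGradientAt_iff_hasFDerivAt]
    refine hfd.congr_fderiv ?_
    ext v
    simp only [InnerProductSpace.toDual_apply_apply, hG, inner_add_left, inner_smul_left,
      inner_sub_left, real_inner_smul_left, hfd₂, ContinuousLinearMap.add_apply,
      ContinuousLinearMap.smul_apply, ContinuousLinearMap.comp_apply,
      ContinuousLinearMap.smulRight_apply, ContinuousLinearMap.id_apply,
      innerSL_apply_apply, smul_eq_mul, inner_smul_right, inner_add_right, inner_sub_right,
      conj_trivial]
    have h1 : ⟪x, v⟫ = ⟪v, x⟫ := real_inner_comm v x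
    have h2 : ⟪x, gradient f₂ (‖x‖⁻¹ • x)⟫ = ⟪gradient f₂ (‖x‖⁻¹ • x), x⟫ :=
      real_inner_comm _ _
    rw [h1, h2]
    field_simp
    ring_nf

  -- gradient at zero and bounds
  obtain ⟨M1, hM1⟩ := (isCompact_sphere (0 : EuclideanSpace ℝ (Fin p)) 1).exists_bound_of_continuousOn
      (hf₂.continuous.continuousOn (s := Metric.sphere 0 1))
  obtain ⟨M2, hM2⟩ := (isCompact_sphere (0 : EuclideanSpace ℝ (Fin p)) 1).exists_bound_of_continuousOn
      ((contDiff_one_iff_fderiv.mp hf₂).2.continuousOn (s := Metric.sphere 0 1))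
  set M₀ : ℝ := max M1 0 with hM₀def
  set M₁ : ℝ := max M2 0 with hM₁def
  have hM₀0 : 0 ≤ M₀ := le_max_right _ _
  have hM₁0 : 0 ≤ M₁ := le_max_right _ _
  have hM₀ : ∀ u : EuclideanSpace ℝ (Fin p), ‖u‖ = 1 → |f₂ u| ≤ M₀ := fun u hu =>
    le_trans (hM1 u (mem_sphere_zero_iff_norm.2 hu)) (le_max_left _ _)
  have hM₁ : ∀ u : EuclideanSpace ℝ (Fin p), ‖u‖ = 1 → ‖fderiv ℝ f₂ u‖ ≤ M₁ := fun u hu =>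
    le_trans (hM2 u (mem_sphere_zero_iff_norm.2 hu)) (le_max_left _ _)
  have hnormgrad : ∀ u : EuclideanSpace ℝ (Fin p), ‖gradient f₂ u‖ = ‖fderiv ℝ f₂ u‖ := by
    intro u
    rw [gradient]
    exact LinearIsometryEquiv.norm_map _ _
  have hunorm : ∀ x : EuclideanSpace ℝ (Fin p), x ≠ 0 → ‖‖x‖⁻¹ • x‖ = 1 := by
    intro x hx
    have ht : ‖x‖ ≠ 0 := norm_ne_zero_iff.2 hx
    rw [norm_smul, norm_inv, norm_norm, inv_mul_cancel₀ ht]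
  have hslope : Filter.Tendsto (fun t : ℝ => |f₁ t| * |t|⁻¹) (𝓝 0) (𝓝 0) := by
    have hp1 : Filter.Tendsto (fun t : ℝ => |f₁ t| * |t|⁻¹) (𝓝[≠] (0:ℝ)) (𝓝 0) := by
      have h := hasDerivAt_iff_tendsto_slope.1 (hf₁d 0).hasDerivAt
      rw [hderiv0] at h
      have h2 : Filter.Tendsto (fun t : ℝ => |slope f₁ 0 t|) (𝓝[≠] (0:ℝ)) (𝓝 0) := by
        simpa using h.abs
      refine h2.congr' ?_
      filter_upwards [self_mem_nhdsWithin] with t ht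
      have ht' : (t : ℝ) ≠ 0 := ht
      rw [slope_def_field, hf₁0, sub_zero, sub_zero, abs_div, div_eq_mul_inv]
    have hp2 : Filter.Tendsto (fun t : ℝ => |f₁ t| * |t|⁻¹) (pure (0:ℝ)) (𝓝 0) := by
      have hval : |f₁ (0:ℝ)| * |(0:ℝ)|⁻¹ = 0 := by simp [hf₁0]
      simpa [hval] using tendsto_pure_nhds (fun t : ℝ => |f₁ t| * |t|⁻¹) 0
    have := hp1.sup hp2
    rwa [nhdsNE_sup_pure] at this
  have hd1 : Filter.Tendsto (fun t : ℝ => |deriv f₁ t|) (𝓝 0) (𝓝 0) := by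
    have := ((contDiff_one_iff_deriv.mp hf₁).2.tendsto 0).abs
    rwa [hderiv0, abs_zero] at this
  set φ : EuclideanSpace ℝ (Fin p) → ℝ := fun x =>
    |deriv f₁ ‖x‖| * M₀ + (|f₁ ‖x‖| * |‖x‖|⁻¹) * (M₀ + 2 * M₁) with hφ
  have hphi : Filter.Tendsto φ (𝓝 0) (𝓝 0) := by
    have h1 : Filter.Tendsto
        (fun t : ℝ => |deriv f₁ t| * M₀ + (|f₁ t| * |t|⁻¹) * (M₀ + 2 * M₁)) (𝓝 0) (𝓝 0) := by
      have := (hd1.mul_const M₀).add (hslope.mul_const (M₀ + 2 * M₁))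
      simpa using this
    have h2 : Filter.Tendsto (fun x : EuclideanSpace ℝ (Fin p) => ‖x‖) (𝓝 0) (𝓝 0) :=
      tendsto_norm_zero
    exact h1.comp h2
  have hphi0 : φ 0 = 0 := by simp [hφ, hf₁0, hderiv0]
  have hphibound : ∀ x : EuclideanSpace ℝ (Fin p), x ≠ 0 →
      ‖x‖⁻¹ * (|f₁ ‖x‖| * |f₂ (‖x‖⁻¹ • x)|) ≤ φ x := by
    intro x hx
    have hb : |f₂ (‖x‖⁻¹ • x)| ≤ M₀ := hM₀ _ (hunorm x hx)
    have hc : (0:ℝ) ≤ ‖x‖⁻¹ * |f₁ ‖x‖| := by positivity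
    have h1 : ‖x‖⁻¹ * (|f₁ ‖x‖| * |f₂ (‖x‖⁻¹ • x)|) ≤ ‖x‖⁻¹ * |f₁ ‖x‖| * M₀ := by
      rw [← mul_assoc]
      exact mul_le_mul_of_nonneg_left hb hc
    refine h1.trans ?_
    simp only [hφ, abs_norm]
    nlinarith [mul_nonneg (abs_nonneg (deriv f₁ ‖x‖)) hM₀0,
      mul_nonneg (mul_nonneg (abs_nonneg (f₁ ‖x‖)) (inv_nonneg.2 (norm_nonneg x))) hM₁0]
  have key0 : HasGradientAt (fun y : EuclideanSpace ℝ (Fin p) => f₁ ‖y‖ * f₂ (‖y‖⁻¹ • y)) 0 0 := by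
    rw [hasGradientAt_iff_hasFDerivAt, map_zero, hasFDerivAt_iff_tendsto]
    refine squeeze_zero_norm (a := φ) ?_ hphi
    intro x
    by_cases hx : x = 0
    · subst hx
      rw [hphi0]
      simp [hf₁0]
    · have hLHS : ‖‖x - 0‖⁻¹ * ‖f₁ ‖x‖ * f₂ (‖x‖⁻¹ • x) -
          (fun y : EuclideanSpace ℝ (Fin p) => f₁ ‖y‖ * f₂ (‖y‖⁻¹ • y)) 0 -
          (0 : (EuclideanSpace ℝ (Fin p)) →L[ℝ] ℝ) (x - 0)‖‖ =
          ‖x‖⁻¹ * (|f₁ ‖x‖| * |f₂ (‖x‖⁻¹ • x)|) := by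
        simp [hf₁0, abs_mul, abs_of_nonneg, norm_nonneg, mul_assoc]
      rw [hLHS]
      exact hphibound x hx
  have hfderiv : ∀ x : EuclideanSpace ℝ (Fin p), x ≠ 0 →
      fderiv ℝ (fun y : EuclideanSpace ℝ (Fin p) => f₁ ‖y‖ * f₂ (‖y‖⁻¹ • y)) x =
        InnerProductSpace.toDual ℝ (EuclideanSpace ℝ (Fin p)) (G x) :=
    fun x hx => ((hasGradientAt_iff_hasFDerivAt.1 (key x hx)).fderiv)
  have hfderiv0 :
      fderiv ℝ (fun y : EuclideanSpace ℝ (Fin p) => f₁ ‖y‖ * f₂ (‖y‖⁻¹ • y)) 0 = 0 := by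
    have h := (hasGradientAt_iff_hasFDerivAt.1 key0).fderiv
    rwa [map_zero] at h
  have hdiff : Differentiable ℝ (fun y : EuclideanSpace ℝ (Fin p) => f₁ ‖y‖ * f₂ (‖y‖⁻¹ • y)) := by
    intro x
    by_cases hx : x = 0
    · subst hx; exact key0.differentiableAt
    · exact (key x hx).differentiableAt
  have hGbound : ∀ x : EuclideanSpace ℝ (Fin p), x ≠ 0 → ‖G x‖ ≤ φ x := by
    intro x hx
    have hu : ‖‖x‖⁻¹ • x‖ = 1 := hunorm x hx
    have hgn : ‖gradient f₂ (‖x‖⁻¹ • x)‖ ≤ M₁ := by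
      rw [hnormgrad]; exact hM₁ _ hu
    have hin : |⟪‖x‖⁻¹ • x, gradient f₂ (‖x‖⁻¹ • x)⟫| ≤ M₁ := by
      refine le_trans (abs_real_inner_le_norm _ _) ?_
      rw [hu, one_mul]; exact hgn
    have hb2 : |f₂ (‖x‖⁻¹ • x)| ≤ M₀ := hM₀ _ hu
    have t1 : ‖G x‖ ≤ |deriv f₁ ‖x‖ * f₂ (‖x‖⁻¹ • x)| * 1 +
        |f₁ ‖x‖ / ‖x‖| * (‖gradient f₂ (‖x‖⁻¹ • x)‖ +
          |⟪‖x‖⁻¹ • x, gradient f₂ (‖x‖⁻¹ • x)⟫| * 1) := by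
      simp only [hG]
      refine le_trans (norm_add_le _ _) ?_
      rw [norm_smul, hu, norm_smul, Real.norm_eq_abs, Real.norm_eq_abs]
      gcongr
      refine le_trans (norm_sub_le _ _) ?_
      rw [norm_smul, hu, Real.norm_eq_abs]
    refine t1.trans ?_
    simp only [hφ, abs_norm, abs_div, abs_inv, mul_one, abs_mul, div_eq_mul_inv]
    nlinarith [hb2, hgn, hin, abs_nonneg (deriv f₁ ‖x‖), abs_nonneg (f₁ ‖x‖),
      inv_nonneg.2 (norm_nonneg x), hM₀0, hM₁0,
      norm_nonneg (gradient f₂ (‖x‖⁻¹ • x)),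
      abs_nonneg (⟪‖x‖⁻¹ • x, gradient f₂ (‖x‖⁻¹ • x)⟫),
      mul_nonneg (abs_nonneg (f₁ ‖x‖)) (inv_nonneg.2 (norm_nonneg x))]
  have hcd : ContDiffOn ℝ 1 (fun y : EuclideanSpace ℝ (Fin p) => f₁ ‖y‖ * f₂ (‖y‖⁻¹ • y))
      {(0 : EuclideanSpace ℝ (Fin p))}ᶜ := by
    intro x hx
    have hx0 : x ≠ (0 : EuclideanSpace ℝ (Fin p)) := hx
    have hn : ContDiffAt ℝ 1 (fun y : EuclideanSpace ℝ (Fin p) => ‖y‖) x :=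
      contDiffAt_norm ℝ hx0
    have hinv : ContDiffAt ℝ 1 (fun y : EuclideanSpace ℝ (Fin p) => ‖y‖⁻¹) x :=
      hn.inv (norm_ne_zero_iff.2 hx0)
    exact (((hf₁.contDiffAt).comp x hn).mul
      ((hf₂.contDiffAt).comp x (hinv.smul contDiffAt_id))).contDiffWithinAt
  have hcont : Continuous
      (fderiv ℝ (fun y : EuclideanSpace ℝ (Fin p) => f₁ ‖y‖ * f₂ (‖y‖⁻¹ • y))) := by
    rw [continuous_iff_continuousAt]
    intro x
    by_cases hx : x = 0
    · subst hx
      have htend : Filter.Tendsto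
          (fderiv ℝ (fun y : EuclideanSpace ℝ (Fin p) => f₁ ‖y‖ * f₂ (‖y‖⁻¹ • y)))
          (𝓝 0) (𝓝 0) := by
        refine squeeze_zero_norm (a := φ) ?_ hphi
        intro z
        by_cases hz : z = 0
        · subst hz; rw [hfderiv0, hphi0, norm_zero]
        · rw [hfderiv z hz,
            (InnerProductSpace.toDual ℝ (EuclideanSpace ℝ (Fin p))).norm_map]
          exact hGbound z hz
      unfold ContinuousAt
      rwa [hfderiv0]
    · exact ((hcd.continuousOn_fderiv_of_isOpen isOpen_compl_singleton le_rfl).continuousAt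
        (isOpen_compl_singleton.mem_nhds hx))
  have hC1 : ContDiff ℝ 1 (fun y : EuclideanSpace ℝ (Fin p) => f₁ ‖y‖ * f₂ (‖y‖⁻¹ • y)) :=
    contDiff_one_iff_fderiv.2 ⟨hdiff, hcont⟩
  refine ⟨?_, hC1, ?_, ?_⟩
  · intro x
    by_cases hx : x = 0
    · subst hx; simp [hf₁0]
    · have h1 : 0 ≤ f₁ ‖x‖ := hf₁0 ▸ hf₁min ‖x‖
      exact mul_nonneg h1 (hf₂pos _ (hunorm x hx))
  · intro x
    by_cases hx : x = 0
    · subst hx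
      simp [hf₁0]
    · have hgx : gradient (fun y : EuclideanSpace ℝ (Fin p) =>
          f₁ ‖y‖ * f₂ (‖y‖⁻¹ • y)) x = G x := (key x hx).gradient
      rw [hgx]
      have hu : ‖‖x‖⁻¹ • x‖ = 1 := hunorm x hx
      have ht : ‖x‖ ≠ 0 := norm_ne_zero_iff.2 hx
      have hip : ⟪G x, (0 : EuclideanSpace ℝ (Fin p)) - x⟫ =
          -(deriv f₁ ‖x‖ * f₂ (‖x‖⁻¹ • x) * ‖x‖) := by
        simp only [hG, zero_sub, inner_neg_right, inner_add_left, inner_smul_left,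
          inner_sub_left, real_inner_smul_left, conj_trivial]
        rw [real_inner_self_eq_norm_mul_norm,
          real_inner_comm (gradient f₂ (‖x‖⁻¹ • x)) x]
        field_simp
        ring
      rw [hip]
      have hq := hf₁qc ‖x‖
      rw [hf₁0] at hq
      have hpos := hf₂pos _ hu
      have hval0 : (fun y : EuclideanSpace ℝ (Fin p) => f₁ ‖y‖ * f₂ (‖y‖⁻¹ • y))
          (0 : EuclideanSpace ℝ (Fin p)) = 0 := by simp [hf₁0]
      have hvalx : (fun y : EuclideanSpace ℝ (Fin p) => f₁ ‖y‖ * f₂ (‖y‖⁻¹ • y)) x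
          = f₁ ‖x‖ * f₂ (‖x‖⁻¹ • x) := rfl
      rw [hval0, hvalx]
      have hmul := mul_le_mul_of_nonneg_left hq hpos
      nlinarith [hmul]
  · intro x hx
    exact (key x hx).gradient
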